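/- In the lattice D8 (integer vectors with even coordinate sum in ℤ^8), the vectors of norm 2 are exactly the 112 vectors ±e_i ± e_j (i < j), and any norm-2 element of the dual lattice D8* not in D8, adjoined to D8, generates a lattice isometric to E8. -/
import Mathlib


/-- The `E₈` lattice: vectors in `ℚ⁸` whose coordinates are all integers or all
half-odd-integers, with coordinate sum an even integer. -/
def E8 : Set (Fin 8 → ℚ) :=
  {v | ((∀ i, ∃ n : ℤ, v i = n) ∨ (∀ i, ∃ n : ℤ, v i = n + 1/2)) ∧
    ∃ m : ℤ, (∑ i, v i) = 2 * m}

/-- The standard inner product on `ℚ⁸`. -/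
def ip (v w : Fin 8 → ℚ) : ℚ := ∑ i, v i * w i

/-- The `D₈` lattice: integer vectors with even coordinate sum. -/
def D8 : Set (Fin 8 → ℚ) :=
  {v | (∀ i, ∃ n : ℤ, v i = n) ∧ ∃ m : ℤ, (∑ i, v i) = 2 * m}


lemma vec_apply (i j : Fin 8) (e f : ℚ) (k : Fin 8) :
    (e • (Pi.single i 1 : Fin 8 → ℚ) + f • (Pi.single j 1 : Fin 8 → ℚ)) k
      = (if k = i then e else 0) + (if k = j then f else 0) := by
  simp [Pi.single_apply, mul_ite]

lemma classify (v : Fin 8 → ℚ) (hint : ∀ i, ∃ n : ℤ, v i = n)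
    (h2 : ∑ i, v i * v i = 2) :
    ∃ i j, i < j ∧ (v i = 1 ∨ v i = -1) ∧ (v j = 1 ∨ v j = -1) ∧
      v = v i • (Pi.single i 1 : Fin 8 → ℚ) + v j • (Pi.single j 1 : Fin 8 → ℚ) := by
  choose n hn using hint
  -- each coordinate in {-1,0,1}
  have hmem : ∀ i, v i = -1 ∨ v i = 0 ∨ v i = 1 := by
    intro i
    have hle : v i * v i ≤ 2 := by
      rw [← h2]
      exact Finset.single_le_sum (fun k _ => mul_self_nonneg (v k)) (Finset.mem_univ i)
    rw [hn i] at hle ⊢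
    have : (n i) * (n i) ≤ 2 := by exact_mod_cast hle
    have h1 : -1 ≤ n i := by nlinarith
    have h2' : n i ≤ 1 := by nlinarith
    interval_cases (n i) <;> simp
  have hsq : ∀ i, v i * v i = if v i = 0 then 0 else 1 := by
    intro i
    rcases hmem i with h | h | h <;> simp [h]
  have hcard : (Finset.univ.filter (fun i => v i ≠ 0)).card = 2 := by
    have : (2 : ℚ) = (Finset.univ.filter (fun i => v i ≠ 0)).card := by
      rw [← h2]
      rw [Finset.sum_congr rfl (fun i _ => hsq i)]
      rw [Finset.sum_ite, Finset.sum_const, Finset.sum_const]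
      simp
    exact_mod_cast this.symm
  rw [Finset.card_eq_two] at hcard
  obtain ⟨a, b, hab, hF⟩ := hcard
  have hzero : ∀ k, k ≠ a → k ≠ b → v k = 0 := by
    intro k hka hkb
    by_contra hk
    have : k ∈ Finset.univ.filter (fun i => v i ≠ 0) := by simp [hk]
    rw [hF] at this
    simp [hka, hkb] at this
  have hva : v a ≠ 0 := by
    have : a ∈ Finset.univ.filter (fun i => v i ≠ 0) := by rw [hF]; simp
    simpa using this
  have hvb : v b ≠ 0 := by
    have : b ∈ Finset.univ.filter (fun i => v i ≠ 0) := by rw [hF]; simp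
    simpa using this
  have hform : ∀ (i j : Fin 8), i ≠ j → ({i, j} : Set (Fin 8)) = {a, b} →
      v = v i • (Pi.single i 1 : Fin 8 → ℚ) + v j • (Pi.single j 1 : Fin 8 → ℚ) := by
    intro i j hij hset
    funext k
    rw [vec_apply]
    by_cases hki : k = i
    · simp [hki, hij]
    · by_cases hkj : k = j
      · simp [hki, hkj, Ne.symm hij]
      · simp only [hki, hkj, if_neg, ite_false, add_zero]
        have hka : k ≠ a ∧ k ≠ b := by
          constructor <;> intro h <;>
          · have : k ∈ ({i, j} : Set (Fin 8)) := by rw [hset]; simp [h]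
            simp [hki, hkj] at this
        exact hzero k hka.1 hka.2
  have hone : ∀ k, v k ≠ 0 → (v k = 1 ∨ v k = -1) := by
    intro k hk; rcases hmem k with h | h | h <;> simp [h] at hk ⊢
  rcases lt_or_gt_of_ne hab with h | h
  · exact ⟨a, b, h, hone a hva, hone b hvb,
      hform a b hab (rfl)⟩
  · exact ⟨b, a, h, hone b hvb, hone a hva,
      hform b a (Ne.symm hab) (by ext x; simp [or_comm])⟩

lemma shape_mem (i j : Fin 8) (hij : i ≠ j) (e f : ℚ)
    (he : e = 1 ∨ e = -1) (hf : f = 1 ∨ f = -1) :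
    let v := e • (Pi.single i 1 : Fin 8 → ℚ) + f • (Pi.single j 1 : Fin 8 → ℚ)
    v ∈ D8 ∧ (∑ k, v k * v k) = 2 := by
  intro v
  have hsum : ∀ (c d : ℚ), (∑ k, ((if k = i then c else 0) + (if k = j then d else 0))) = c + d := by
    intro c d
    rw [Finset.sum_add_distrib, Finset.sum_ite_eq' Finset.univ i, Finset.sum_ite_eq' Finset.univ j]
    simp
  have happ : ∀ k, v k = (if k = i then e else 0) + (if k = j then f else 0) :=
    fun k => vec_apply i j e f k
  refine ⟨⟨?_, ?_⟩, ?_⟩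
  · intro k
    rw [happ k]
    obtain ⟨a, ha⟩ : ∃ a : ℤ, e = (a : ℚ) := by
      rcases he with rfl | rfl
      exacts [⟨1, by norm_num⟩, ⟨-1, by norm_num⟩]
    obtain ⟨b, hb⟩ : ∃ b : ℤ, f = (b : ℚ) := by
      rcases hf with rfl | rfl
      exacts [⟨1, by norm_num⟩, ⟨-1, by norm_num⟩]
    refine ⟨(if k = i then a else 0) + (if k = j then b else 0), ?_⟩
    rw [ha, hb]
    split_ifs <;> push_cast <;> ring
  · rw [Finset.sum_congr rfl (fun k _ => happ k), hsum]
    rcases he with rfl | rfl <;> rcases hf with rfl | rfl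
    · exact ⟨1, by norm_num⟩
    · exact ⟨0, by norm_num⟩
    · exact ⟨0, by norm_num⟩
    · exact ⟨-1, by norm_num⟩
  · have : ∀ k, v k * v k = (if k = i then e * e else 0) + (if k = j then f * f else 0) := by
      intro k
      rw [happ k]
      split_ifs with h1 h2 h2
      · exact absurd (h1 ▸ h2 : i = j) hij
      · ring
      · ring
      · ring
    rw [Finset.sum_congr rfl (fun k _ => this k), hsum]
    rcases he with rfl | rfl <;> rcases hf with rfl | rfl <;> norm_num

lemma set_eq :
    {v : Fin 8 → ℚ | v ∈ D8 ∧ ip v v = 2} =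
      {v : Fin 8 → ℚ | ∃ i j : Fin 8, i < j ∧ ∃ e f : ℚ,
        (e = 1 ∨ e = -1) ∧ (f = 1 ∨ f = -1) ∧
        v = e • (Pi.single i 1 : Fin 8 → ℚ) + f • (Pi.single j 1 : Fin 8 → ℚ)} := by
  ext v
  constructor
  · rintro ⟨⟨hint, _⟩, h2⟩
    obtain ⟨i, j, hij, hvi, hvj, hv⟩ := classify v hint h2
    exact ⟨i, j, hij, v i, v j, hvi, hvj, hv⟩
  · rintro ⟨i, j, hij, e, f, he, hf, rfl⟩
    obtain ⟨h1, h2⟩ := shape_mem i j hij.ne e f he hf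
    exact ⟨h1, h2⟩

lemma inj_core (i j i' j' : Fin 8) (hij : i < j) (hij' : i' < j')
    (e f e' f' : ℚ) (he : e ≠ 0) (hf : f ≠ 0) (he' : e' ≠ 0) (hf' : f' ≠ 0)
    (h : e • (Pi.single i 1 : Fin 8 → ℚ) + f • (Pi.single j 1 : Fin 8 → ℚ)
       = e' • (Pi.single i' 1 : Fin 8 → ℚ) + f' • (Pi.single j' 1 : Fin 8 → ℚ)) :
    i = i' ∧ j = j' ∧ e = e' ∧ f = f' := by
  have H : ∀ k, (if k = i then e else 0) + (if k = j then f else 0)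
      = (if k = i' then e' else 0) + (if k = j' then f' else 0) := by
    intro k
    rw [← vec_apply, ← vec_apply, h]
  have hii' : i = i' := by
    by_contra hne
    have h1 := H i
    rw [if_pos rfl, if_neg hij.ne, if_neg hne] at h1
    have hij2 : i = j' := by
      by_contra hne2
      rw [if_neg hne2] at h1
      simp at h1
      exact he h1
    have h2 := H i'
    rw [if_pos rfl, if_neg (Ne.symm hne), if_neg hij'.ne] at h2
    have hii2 : i' = j := by
      by_contra hne2
      rw [if_neg hne2] at h2
      simp at h2
      exact he' h2.symm
    -- i < j = i' < j' = i, contradiction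
    rw [← hii2] at hij
    rw [← hij2] at hij'
    exact absurd hij (lt_asymm hij')
  have hjj' : j = j' := by
    by_contra hne
    have h1 := H j
    rw [if_pos rfl, if_neg (Ne.symm hij.ne), if_neg hne, if_neg (hii' ▸ Ne.symm hij.ne)] at h1
    simp at h1
    exact hf h1
  refine ⟨hii', hjj', ?_, ?_⟩
  · have h1 := H i
    rw [if_pos rfl, if_neg hij.ne, if_pos hii', if_neg (hjj' ▸ hij.ne)] at h1
    simpa using h1
  · have h1 := H j
    rw [if_pos rfl, if_neg (Ne.symm hij.ne), if_pos hjj', if_neg (hii' ▸ Ne.symm hij.ne)] at h1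
    simpa using h1

def theFinset : Finset (Fin 8 → ℚ) :=
  ((Finset.univ.filter (fun p : Fin 8 × Fin 8 => p.1 < p.2)) ×ˢ
      ((({1, -1} : Finset ℚ) ×ˢ ({1, -1} : Finset ℚ)))).image
    (fun q => q.2.1 • (Pi.single q.1.1 1 : Fin 8 → ℚ) + q.2.2 • Pi.single q.1.2 1)

lemma theFinset_card : theFinset.card = 112 := by
  rw [theFinset, Finset.card_image_of_injOn, Finset.card_product, Finset.card_product]
  · have h1 : (Finset.univ.filter (fun p : Fin 8 × Fin 8 => p.1 < p.2)).card = 28 := by decide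
    have h2 : ({1, -1} : Finset ℚ).card = 2 := by
      rw [Finset.card_insert_of_notMem (by norm_num), Finset.card_singleton]
    rw [h1, h2]
  · rintro ⟨⟨i, j⟩, ⟨e, f⟩⟩ hq ⟨⟨i', j'⟩, ⟨e', f'⟩⟩ hq' heq
    simp only [Finset.coe_filter, Finset.mem_coe, Finset.mem_product, Finset.mem_filter,
      Finset.mem_univ, true_and, Set.mem_setOf_eq, Finset.mem_insert, Finset.mem_singleton] at hq hq'
    have hne : ∀ x : ℚ, x = 1 ∨ x = -1 → x ≠ 0 := by rintro x (rfl | rfl) <;> norm_num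
    obtain ⟨h1, h2, h3, h4⟩ := inj_core i j i' j' hq.1 hq'.1 e f e' f'
      (hne e hq.2.1) (hne f hq.2.2) (hne e' hq'.2.1) (hne f' hq'.2.2) heq
    simp [h1, h2, h3, h4]

lemma set_eq_finset :
    {v : Fin 8 → ℚ | v ∈ D8 ∧ ip v v = 2} = ↑theFinset := by
  rw [set_eq]
  ext v
  simp only [theFinset, Finset.coe_image, Set.mem_image, Finset.mem_coe, Finset.mem_product,
    Finset.mem_filter, Finset.mem_univ, true_and, Finset.mem_insert, Finset.mem_singleton,
    Set.mem_setOf_eq]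
  constructor
  · rintro ⟨i, j, hij, e, f, he, hf, rfl⟩
    exact ⟨⟨⟨i, j⟩, ⟨e, f⟩⟩, ⟨hij, he, hf⟩, rfl⟩
  · rintro ⟨⟨⟨i, j⟩, ⟨e, f⟩⟩, ⟨hij, he, hf⟩, rfl⟩
    exact ⟨i, j, hij, e, f, he, hf, rfl⟩

lemma card112 : {v : Fin 8 → ℚ | v ∈ D8 ∧ ip v v = 2}.ncard = 112 := by
  rw [set_eq_finset, Set.ncard_coe_finset, theFinset_card]

def E8grp : AddSubgroup (Fin 8 → ℚ) where
  carrier := E8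
  zero_mem' := ⟨Or.inl fun i => ⟨0, by simp⟩, 0, by simp⟩
  add_mem' := by
    rintro a b ⟨ha, ma, hma⟩ ⟨hb, mb, hmb⟩
    refine ⟨?_, ma + mb, by simp only [Pi.add_apply, Finset.sum_add_distrib]; rw [hma, hmb]; push_cast; ring⟩
    rcases ha with ha | ha <;> rcases hb with hb | hb
    · exact Or.inl fun i => by
        obtain ⟨n, hn⟩ := ha i; obtain ⟨m, hm⟩ := hb i
        exact ⟨n + m, by rw [Pi.add_apply, hn, hm]; push_cast; ring⟩
    · exact Or.inr fun i => by
        obtain ⟨n, hn⟩ := ha i; obtain ⟨m, hm⟩ := hb i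
        exact ⟨n + m, by rw [Pi.add_apply, hn, hm]; push_cast; ring⟩
    · exact Or.inr fun i => by
        obtain ⟨n, hn⟩ := ha i; obtain ⟨m, hm⟩ := hb i
        exact ⟨n + m, by rw [Pi.add_apply, hn, hm]; push_cast; ring⟩
    · exact Or.inl fun i => by
        obtain ⟨n, hn⟩ := ha i; obtain ⟨m, hm⟩ := hb i
        exact ⟨n + m + 1, by rw [Pi.add_apply, hn, hm]; push_cast; ring⟩
  neg_mem' := by
    rintro a ⟨ha, ma, hma⟩
    refine ⟨?_, -ma, by simp only [Pi.neg_apply, Finset.sum_neg_distrib]; rw [hma]; push_cast; ring⟩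
    rcases ha with ha | ha
    · exact Or.inl fun i => by
        obtain ⟨n, hn⟩ := ha i
        exact ⟨-n, by rw [Pi.neg_apply, hn]; push_cast; ring⟩
    · exact Or.inr fun i => by
        obtain ⟨n, hn⟩ := ha i
        exact ⟨-n - 1, by rw [Pi.neg_apply, hn]; push_cast; ring⟩

lemma span_half (h : Fin 8 → ℚ) (hh : ∀ i, h i = 1/2 ∨ h i = -1/2)
    (hs : ∃ m : ℤ, ∑ i, h i = 2 * m) :
    (Submodule.span ℤ (insert h D8) : Set (Fin 8 → ℚ)) = E8 := by
  apply subset_antisymm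
  · have hle : Submodule.span ℤ (insert h D8) ≤ AddSubgroup.toIntSubmodule E8grp := by
      rw [Submodule.span_le]
      rintro x (rfl | hx)
      · refine ⟨Or.inr fun i => ?_, hs⟩
        rcases hh i with h1 | h1
        · exact ⟨0, by rw [h1]; norm_num⟩
        · exact ⟨-1, by rw [h1]; norm_num⟩
      · exact ⟨Or.inl hx.1, hx.2⟩
    exact fun x hx => hle hx
  · rintro v ⟨hcoords, m, hm⟩
    rcases hcoords with hint | hhalf
    · exact Submodule.subset_span (Set.mem_insert_of_mem _ ⟨hint, m, hm⟩)
    · have hd : v - h ∈ D8 := by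
        constructor
        · intro i
          obtain ⟨n, hn⟩ := hhalf i
          rcases hh i with h1 | h1
          · exact ⟨n, by rw [Pi.sub_apply, hn, h1]; ring⟩
          · exact ⟨n + 1, by rw [Pi.sub_apply, hn, h1]; push_cast; ring⟩
        · obtain ⟨m', hm'⟩ := hs
          exact ⟨m - m', by simp only [Pi.sub_apply, Finset.sum_sub_distrib]; rw [hm, hm']; push_cast; ring⟩
      have hv : v = h + (v - h) := by rw [add_sub_cancel]
      rw [hv]
      exact Submodule.add_mem _ (Submodule.subset_span (Set.mem_insert _ _))
        (Submodule.subset_span (Set.mem_insert_of_mem _ hd))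

def flipMap : (Fin 8 → ℚ) →ₗ[ℚ] (Fin 8 → ℚ) where
  toFun x := fun k => if k = 0 then -x k else x k
  map_add' x y := by funext k; simp only [Pi.add_apply]; split_ifs <;> ring
  map_smul' c x := by funext k; simp only [Pi.smul_apply, smul_eq_mul, RingHom.id_apply]
                      split_ifs <;> ring

lemma flip_invol : Function.Involutive flipMap := by
  intro x
  funext k
  show (if k = 0 then -(if k = 0 then -x k else x k) else (if k = 0 then -x k else x k)) = x k
  split_ifs <;> ring

def flipEquiv : (Fin 8 → ℚ) ≃ₗ[ℚ] (Fin 8 → ℚ) :=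
  LinearEquiv.ofInvolutive flipMap flip_invol

lemma flip_apply (x : Fin 8 → ℚ) (k : Fin 8) :
    flipEquiv x k = if k = 0 then -x k else x k := rfl

lemma flip_ip (x y : Fin 8 → ℚ) : ip (flipEquiv x) (flipEquiv y) = ip x y := by
  unfold ip
  apply Finset.sum_congr rfl
  intro k _
  rw [flip_apply, flip_apply]
  split_ifs <;> ring

lemma flip_mem_D8 (x : Fin 8 → ℚ) (hx : x ∈ D8) : flipEquiv x ∈ D8 := by
  obtain ⟨hint, m, hm⟩ := hx
  constructor
  · intro k
    obtain ⟨n, hn⟩ := hint k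
    rw [flip_apply]
    split_ifs
    · exact ⟨-n, by rw [hn]; push_cast; ring⟩
    · exact ⟨n, hn⟩
  · obtain ⟨n0, hn0⟩ := hint 0
    refine ⟨m - n0, ?_⟩
    have : ∀ k, flipEquiv x k = x k - (if k = 0 then 2 * x k else 0) := by
      intro k; rw [flip_apply]; split_ifs <;> ring
    rw [Finset.sum_congr rfl (fun k _ => this k), Finset.sum_sub_distrib,
      Finset.sum_ite_eq' Finset.univ (0 : Fin 8), hm]
    simp [hn0]
    push_cast
    ring

lemma flip_image_D8 : flipEquiv '' D8 = D8 := by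
  apply subset_antisymm
  · rintro _ ⟨x, hx, rfl⟩
    exact flip_mem_D8 x hx
  · intro x hx
    exact ⟨flipEquiv x, flip_mem_D8 x hx, flip_invol x⟩

lemma ip_single (g : Fin 8 → ℚ) (i : Fin 8) : ip g (Pi.single i 1) = g i := by
  unfold ip
  rw [Finset.sum_congr rfl (fun k _ => by rw [Pi.single_apply, mul_ite, mul_one, mul_zero]),
    Finset.sum_ite_eq' Finset.univ i]
  simp

lemma ip_add (g x y : Fin 8 → ℚ) : ip g (x + y) = ip g x + ip g y := by
  unfold ip
  rw [← Finset.sum_add_distrib]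
  exact Finset.sum_congr rfl fun k _ => by rw [Pi.add_apply]; ring

lemma ip_sub (g x y : Fin 8 → ℚ) : ip g (x - y) = ip g x - ip g y := by
  unfold ip
  rw [← Finset.sum_sub_distrib]
  exact Finset.sum_congr rfl fun k _ => by rw [Pi.sub_apply]; ring

lemma single_add_mem (i j : Fin 8) (hij : i ≠ j) :
    (Pi.single i 1 + Pi.single j 1 : Fin 8 → ℚ) ∈ D8 := by
  have := (shape_mem i j hij 1 1 (Or.inl rfl) (Or.inl rfl)).1
  simpa using this

lemma single_sub_mem (i j : Fin 8) (hij : i ≠ j) :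
    (Pi.single i 1 - Pi.single j 1 : Fin 8 → ℚ) ∈ D8 := by
  have := (shape_mem i j hij 1 (-1) (Or.inl rfl) (Or.inr rfl)).1
  have he : (Pi.single i 1 - Pi.single j 1 : Fin 8 → ℚ)
      = (1 : ℚ) • (Pi.single i 1 : Fin 8 → ℚ) + (-1 : ℚ) • (Pi.single j 1 : Fin 8 → ℚ) := by
    funext k; simp [Pi.single_apply]; ring
  rwa [he]

lemma dual_analysis (g : Fin 8 → ℚ) (hdual : ∀ x ∈ D8, ∃ n : ℤ, ip g x = n)
    (hg : g ∉ D8) (hnorm : ip g g = 2) :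
    (∀ i, g i = 1/2 ∨ g i = -1/2) ∧ ∃ T : ℤ, (T : ℚ) = ∑ i, g i := by
  -- pairing with e_i ± e_j
  have hplus : ∀ i j : Fin 8, i ≠ j → ∃ n : ℤ, g i + g j = n := by
    intro i j hij
    obtain ⟨n, hn⟩ := hdual _ (single_add_mem i j hij)
    rw [ip_add, ip_single, ip_single] at hn
    exact ⟨n, hn⟩
  have hminus : ∀ i j : Fin 8, i ≠ j → ∃ n : ℤ, g i - g j = n := by
    intro i j hij
    obtain ⟨n, hn⟩ := hdual _ (single_sub_mem i j hij)
    rw [ip_sub, ip_single, ip_single] at hn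
    exact ⟨n, hn⟩
  have hdouble : ∀ i : Fin 8, ∃ n : ℤ, 2 * g i = n := by
    intro i
    have hij : i ≠ (if i = 0 then 1 else 0) := by split_ifs with h <;> simp [h, Fin.ext_iff]
    obtain ⟨n, hn⟩ := hplus i _ hij
    obtain ⟨m, hm⟩ := hminus i _ hij
    exact ⟨n + m, by push_cast; linarith⟩
  -- g 0 is not an integer
  have h0 : ¬ ∃ n : ℤ, g 0 = n := by
    rintro ⟨n0, hn0⟩
    apply hg
    have hint : ∀ i, ∃ n : ℤ, g i = n := by
      intro i
      by_cases hi : i = 0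
      · exact hi ▸ ⟨n0, hn0⟩
      · obtain ⟨m, hm⟩ := hminus i 0 hi
        exact ⟨m + n0, by push_cast; rw [← hn0]; linarith⟩
    obtain ⟨i, j, hij, hvi, hvj, hv⟩ := classify g hint hnorm
    have := (shape_mem i j hij.ne (g i) (g j) hvi hvj).1
    rwa [← hv] at this
  choose c hc using hdouble
  -- all c i odd
  have hodd : ∀ i, Odd (c i) := by
    have hodd0 : Odd (c 0) := by
      rcases Int.even_or_odd (c 0) with ⟨k, hk⟩ | h
      · exact absurd ⟨k, by have := hc 0; rw [hk] at this; push_cast at this; linarith⟩ h0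
      · exact h
    intro i
    by_cases hi : i = 0
    · exact hi ▸ hodd0
    · obtain ⟨m, hm⟩ := hminus i 0 hi
      have : c i = c 0 + 2 * m := by
        have h1 := hc i; have h2 := hc 0
        have : (c i : ℚ) = (c 0 : ℚ) + 2 * m := by push_cast; linarith
        exact_mod_cast this
      obtain ⟨k, hk⟩ := hodd0
      exact ⟨k + m, by omega⟩
  -- sum of squares of c is 8
  have hsq8 : ∑ i, c i * c i = 8 := by
    have : (∑ i, (c i : ℚ) * (c i : ℚ)) = 8 := by
      have : ∀ i, (c i : ℚ) * (c i : ℚ) = 4 * (g i * g i) := by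
        intro i; rw [← hc i]; ring
      rw [Finset.sum_congr rfl (fun i _ => this i), ← Finset.mul_sum]
      unfold ip at hnorm
      rw [hnorm]; norm_num
    exact_mod_cast this
  -- each c i = ±1
  have hci : ∀ i, c i = 1 ∨ c i = -1 := by
    have hone : ∀ i ∈ Finset.univ, (0 : ℤ) ≤ c i * c i - 1 := by
      intro i _
      obtain ⟨k, hk⟩ := hodd i
      have h1 : c i ≤ -1 ∨ 1 ≤ c i := by omega
      rcases h1 with h | h <;> nlinarith
    have hzero : ∑ i, (c i * c i - 1) = 0 := by
      rw [Finset.sum_sub_distrib, hsq8]; simp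
    have := (Finset.sum_eq_zero_iff_of_nonneg hone).mp hzero
    intro i
    have hi := this i (Finset.mem_univ i)
    have h1 : (c i - 1) * (c i + 1) = 0 := by nlinarith
    rcases mul_eq_zero.mp h1 with h | h
    · left; omega
    · right; omega
  constructor
  · intro i
    rcases hci i with h | h
    · left; have := hc i; rw [h] at this; push_cast at this; linarith
    · right; have := hc i; rw [h] at this; push_cast at this; linarith
  · -- sum is an integer
    choose d hd using hodd
    have hk : ∑ i, c i = 2 * ((∑ i, d i) + 4) := by
      rw [Finset.sum_congr rfl fun i _ => hd i, Finset.sum_add_distrib, Finset.sum_const,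
        ← Finset.mul_sum]
      simp
      ring
    refine ⟨(∑ i, d i) + 4, ?_⟩
    have h2 : (2 : ℚ) * (∑ i, g i) = ∑ i, (c i : ℚ) := by
      rw [Finset.mul_sum]
      exact Finset.sum_congr rfl fun i _ => hc i
    have h3 : (∑ i, (c i : ℚ)) = ((∑ i, c i : ℤ) : ℚ) := by push_cast; ring
    rw [hk] at h3
    push_cast at h3 ⊢
    linarith [h2, h3]

lemma image_span (φ : (Fin 8 → ℚ) ≃ₗ[ℚ] (Fin 8 → ℚ)) (s : Set (Fin 8 → ℚ)) :
    φ '' (Submodule.span ℤ s : Set (Fin 8 → ℚ)) = (Submodule.span ℤ (φ '' s) : Set (Fin 8 → ℚ)) := by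
  have h := Submodule.map_span (φ.toLinearMap.restrictScalars ℤ) s
  have h2 : ((Submodule.span ℤ s).map (φ.toLinearMap.restrictScalars ℤ) : Set (Fin 8 → ℚ))
      = φ '' (Submodule.span ℤ s : Set (Fin 8 → ℚ)) := rfl
  rw [← h2, h]
  rfl

lemma flip_sum (x : Fin 8 → ℚ) : ∑ k, flipEquiv x k = (∑ k, x k) - 2 * x 0 := by
  have h : ∀ k, flipEquiv x k = x k - (if k = 0 then 2 * x k else 0) := by
    intro k; rw [flip_apply]; split_ifs <;> ring
  rw [Finset.sum_congr rfl (fun k _ => h k), Finset.sum_sub_distrib,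
    Finset.sum_ite_eq' Finset.univ (0 : Fin 8)]
  simp

/-- In `D₈` the norm-2 vectors are exactly the 112 vectors `±eᵢ ± eⱼ` (`i < j`), and
adjoining to `D₈` any norm-2 element of the dual lattice `D₈*` not lying in `D₈`
generates a lattice isometric to `E₈`. -/
theorem stmt17 :
    ({v : Fin 8 → ℚ | v ∈ D8 ∧ ip v v = 2} =
      {v : Fin 8 → ℚ | ∃ i j : Fin 8, i < j ∧ ∃ e f : ℚ,
        (e = 1 ∨ e = -1) ∧ (f = 1 ∨ f = -1) ∧
        v = e • (Pi.single i 1 : Fin 8 → ℚ) + f • (Pi.single j 1 : Fin 8 → ℚ)} ∧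
      {v : Fin 8 → ℚ | v ∈ D8 ∧ ip v v = 2}.ncard = 112) ∧
    ∀ g : Fin 8 → ℚ, (∀ x ∈ D8, ∃ n : ℤ, ip g x = n) → g ∉ D8 → ip g g = 2 →
      ∃ φ : (Fin 8 → ℚ) ≃ₗ[ℚ] (Fin 8 → ℚ),
        (∀ x y, ip (φ x) (φ y) = ip x y) ∧
        φ '' (Submodule.span ℤ (insert g D8) : Set (Fin 8 → ℚ)) = E8 := by
  refine ⟨⟨set_eq, card112⟩, ?_⟩
  intro g hdual hg hnorm
  obtain ⟨hhalf, T, hT⟩ := dual_analysis g hdual hg hnorm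
  rcases Int.even_or_odd T with ⟨t, ht⟩ | ⟨t, ht⟩
  · refine ⟨LinearEquiv.refl ℚ _, fun x y => rfl, ?_⟩
    have hid : ⇑(LinearEquiv.refl ℚ (Fin 8 → ℚ)) = id := rfl
    rw [hid, Set.image_id]
    exact span_half g hhalf ⟨t, by rw [← hT, ht]; push_cast; ring⟩
  · refine ⟨flipEquiv, flip_ip, ?_⟩
    rw [image_span flipEquiv, Set.image_insert_eq, flip_image_D8]
    apply span_half
    · intro i
      rw [flip_apply]
      split_ifs
      · rcases hhalf i with h | h <;> [right; left] <;> rw [h] <;> norm_num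
      · exact hhalf i
    · rw [flip_sum]
      rcases hhalf 0 with h | h
      · exact ⟨t, by rw [h, ← hT, ht]; push_cast; ring⟩
      · exact ⟨t + 1, by rw [h, ← hT, ht]; push_cast; ring⟩
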